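/- arXiv:0909.0136 — 4 statements merged into one kernel-verified Lean document; each statement's English description precedes it below -/
import Mathlib

section
/- Let $X$ be a Banach space, $T, U : X \to \mathbb{R}$ continuous with $T \geq 0$, $T(0) = U(0) = 0$, $F = T - U$, $i_\lambda = \inf\{T(u) : U(u) = \lambda\}$, $\lambda^{**} = \inf\{\lambda > 0 : i_\lambda - \lambda < 0\} > 0$, and assume $\lambda \mapsto i_\lambda - \lambda$ is continuous on $(0,\lambda^{**}]$ and attains its maximum on $(0, \lambda^{**})$ at some $\bar\lambda$. Then for every path $\eta \in C([0,1]; X)$ with $\eta(0)=0$ and $F(\eta(1)) < 0$, there exists $\bar t \in (0,1)$ with $U(\eta(\bar t)) = \bar\lambda$, where $i_{\bar\lambda} - \bar\lambda = \max_{\lambda \in (0,\lambda^{**})}(i_\lambda - \lambda)$. -/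
open Set

/-- Every admissible mountain pass path must cross the level set `{U = λ̄}` where
`λ̄ ∈ (0, λ**)` maximizes `I λ = i λ - λ` over `(0, λ**)`. -/
theorem path_crosses_maximal_level
    {X : Type*} [NormedAddCommGroup X] [NormedSpace ℝ X] [CompleteSpace X]
    (T U : X → ℝ) (hT : Continuous T) (hU : Continuous U)
    (hTnonneg : ∀ u, 0 ≤ T u) (hT0 : T 0 = 0) (hU0 : U 0 = 0)
    (F : X → ℝ) (hF : ∀ u, F u = T u - U u)
    (i : ℝ → ℝ) (hi : ∀ l : ℝ, i l = sInf (T '' {u | U u = l}))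
    (lss : ℝ) (hlss : lss = sInf {l : ℝ | 0 < l ∧ i l - l < 0})
    (hlsspos : 0 < lss)
    (hIcont : ContinuousOn (fun l => i l - l) (Ioc 0 lss))
    (lbar : ℝ) (hlbar : lbar ∈ Ioo 0 lss)
    (hmax : ∀ l ∈ Ioo 0 lss, i l - l ≤ i lbar - lbar) :
    ∀ η : ℝ → X, ContinuousOn η (Icc 0 1) → η 0 = 0 → F (η 1) < 0 →
      ∃ t ∈ Ioo (0:ℝ) 1, U (η t) = lbar := by
  intro η hη hη0 hFη1
  obtain ⟨hlbar0, hlbarlss⟩ := hlbar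
  set l1 := U (η 1) with hl1
  have hTl1 : T (η 1) < l1 := by have := hFη1; rw [hF] at this; linarith
  have hl1pos : 0 < l1 := lt_of_le_of_lt (hTnonneg _) hTl1
  have hil1 : i l1 ≤ T (η 1) := by
    rw [hi]
    exact csInf_le ⟨0, fun x ⟨u, _, hu⟩ => hu ▸ hTnonneg u⟩ ⟨η 1, rfl, rfl⟩
  have hmem : l1 ∈ {l : ℝ | 0 < l ∧ i l - l < 0} := ⟨hl1pos, by linarith⟩
  have hlss_le : lss ≤ l1 := by
    rw [hlss]
    exact csInf_le ⟨0, fun x hx => le_of_lt hx.1⟩ hmem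
  have hlbar_lt : lbar < l1 := lt_of_lt_of_le hlbarlss hlss_le
  have hcont : ContinuousOn (fun t => U (η t)) (Icc 0 1) := hU.comp_continuousOn hη
  have hmem' : lbar ∈ Icc (U (η 0)) (U (η 1)) := by
    rw [hη0, hU0]; exact ⟨le_of_lt hlbar0, le_of_lt hlbar_lt⟩
  obtain ⟨t, ht, hUt⟩ := intermediate_value_Icc (by norm_num : (0:ℝ) ≤ 1) hcont hmem'
  refine ⟨t, ⟨?_, ?_⟩, hUt⟩
  · rcases eq_or_lt_of_le ht.1 with h | h
    · exfalso; simp only [← h, hη0, hU0] at hUt; linarith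
    · exact h
  · rcases eq_or_lt_of_le ht.2 with h | h
    · exfalso; simp only [h] at hUt; rw [hl1, hUt] at hlbar_lt; exact lt_irrefl _ hlbar_lt
    · exact h
end

section
/- Let $X$ be a Banach space, $T, U : X \to \mathbb{R}$ continuous, $T \geq 0$, $T(0)=U(0)=0$, $F = T - U$, and $i_\lambda = \inf\{T(u) : U(u) = \lambda\}$. Assume: (i) $i_\lambda \to 0$ as $\lambda \to 0^+$; (ii) $\lambda^* := \inf\{\lambda > 0 : i_\lambda - \lambda \leq 0\} > 0$; (iii) $\lambda^{**} := \inf\{\lambda > 0 : i_\lambda - \lambda < 0\} > 0$; (iv) for every $\lambda > 0$ the set $\mathcal{M}_\lambda = \{u : U(u) = \lambda,\ T(u) = i_\lambda\}$ is nonempty; (v) there is a continuous $\gamma : [0,\infty) \to X$ with $\gamma(\lambda) \in \mathcal{M}_\lambda$ for all $\lambda > 0$ and $\gamma(0)=0$. Let $c = \inf_{\eta \in \Gamma} \sup_{t \in [0,1]} F(\eta(t))$ where $\Gamma = \{\eta \in C([0,1];X): \eta(0)=0,\ F(\eta(1))<0\}$. Then $c > 0$ and $c = \sup_{\lambda \in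 (0,\lambda^{**})} \inf_{u \in \mathcal{U}_\lambda} F(u) = \sup_{\lambda \in (0,\lambda^{**})} F(\gamma(\lambda))$. -/
open Set

/-- Max-min characterization of the mountain pass energy level: under the hypotheses of the
abstract theorem, `c > 0` and `c` equals the sup over `λ ∈ (0, λ**)` of the min of `F` on the
level set `{U = λ}`, which equals the sup of `F` along the continuous path of minimizers. -/
theorem maxmin_mountain_pass
    {X : Type*} [NormedAddCommGroup X] [NormedSpace ℝ X] [CompleteSpace X]
    (T U : X → ℝ) (hT : Continuous T) (hU : Continuous U)
    (hTnonneg : ∀ u, 0 ≤ T u) (hT0 : T 0 = 0) (hU0 : U 0 = 0)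
    (F : X → ℝ) (hF : ∀ u, F u = T u - U u)
    (i : ℝ → ℝ) (hi : ∀ l : ℝ, i l = sInf (T '' {u | U u = l}))
    -- (i) i λ → 0 as λ → 0⁺
    (hi0 : Filter.Tendsto i (nhdsWithin 0 (Ioi 0)) (nhds 0))
    -- (ii) λ* > 0
    (ls : ℝ) (hls : ls = sInf {l : ℝ | 0 < l ∧ i l - l ≤ 0}) (hlspos : 0 < ls)
    -- (iii) λ** > 0
    (lss : ℝ) (hlss : lss = sInf {l : ℝ | 0 < l ∧ i l - l < 0}) (hlsspos : 0 < lss)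
    -- (iv) minimizers exist at every positive level
    (hmin : ∀ l : ℝ, 0 < l → ∃ u, U u = l ∧ T u = i l)
    -- (v) continuous selection of minimizers
    (γ : ℝ → X) (hγcont : ContinuousOn γ (Ici 0)) (hγ0 : γ 0 = 0)
    (hγ : ∀ l : ℝ, 0 < l → U (γ l) = l ∧ T (γ l) = i l)
    -- the mountain pass level
    (c : ℝ)
    (hc : c = sInf {m : ℝ | ∃ η : ℝ → X, ContinuousOn η (Icc 0 1) ∧ η 0 = 0 ∧
            F (η 1) < 0 ∧ m = sSup ((fun t => F (η t)) '' Icc 0 1)}) :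
    0 < c ∧
      c = sSup ((fun l => sInf (F '' {u | U u = l})) '' Ioo 0 lss) ∧
      c = sSup ((fun l => F (γ l)) '' Ioo 0 lss) := by
  have hFc : Continuous F := by
    have h : F = fun u => T u - U u := funext hF
    rw [h]; exact hT.sub hU
  have hTBB : ∀ l : ℝ, BddBelow (T '' {u | U u = l}) :=
    fun l => ⟨0, by rintro x ⟨u, -, rfl⟩; exact hTnonneg u⟩
  have hile : ∀ u : X, i (U u) ≤ T u := by
    intro u; rw [hi]; exact csInf_le (hTBB _) ⟨u, rfl, rfl⟩
  have hglv : ∀ l : ℝ, 0 < l → F (γ l) = i l - l := by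
    intro l hl
    obtain ⟨h1, h2⟩ := hγ l hl
    rw [hF, h1, h2]
  have hg0 : F (γ 0) = 0 := by rw [hγ0, hF, hT0, hU0]; ring
  have hgcont : ContinuousOn (fun l => F (γ l)) (Ici 0) :=
    hFc.comp_continuousOn hγcont
  have hSltBB : BddBelow {l : ℝ | 0 < l ∧ i l - l < 0} := ⟨0, fun x hx => hx.1.le⟩
  have hSleBB : BddBelow {l : ℝ | 0 < l ∧ i l - l ≤ 0} := ⟨0, fun x hx => hx.1.le⟩
  have hSltne : {l : ℝ | 0 < l ∧ i l - l < 0}.Nonempty := by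
    by_contra h
    rw [not_nonempty_iff_eq_empty] at h
    rw [h, Real.sInf_empty] at hlss
    exact absurd hlss hlsspos.ne'
  have hgnn : ∀ l : ℝ, 0 < l → l < lss → 0 ≤ i l - l := by
    intro l h1 h2
    by_contra h
    push_neg at h
    have : lss ≤ l := hlss ▸ csInf_le hSltBB ⟨h1, h⟩
    linarith
  have hgspos : ∀ l : ℝ, 0 < l → l < ls → 0 < i l - l := by
    intro l h1 h2
    by_contra h
    push_neg at h
    have : ls ≤ l := hls ▸ csInf_le hSleBB ⟨h1, h⟩
    linarith
  have hca : ContinuousAt (fun l => F (γ l)) lss :=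
    hgcont.continuousAt (Ici_mem_nhds hlsspos)
  rw [Metric.continuousAt_iff] at hca
  -- value at lss is 0
  have hglss : F (γ lss) = 0 := by
    rcases lt_trichotomy (F (γ lss)) 0 with h | h | h
    · exfalso
      obtain ⟨δ, hδ, hball⟩ := hca (-(F (γ lss))) (by linarith)
      set l := max (lss - δ/2) (lss/2) with hl
      have hl1 : 0 < l := lt_max_of_lt_right (by linarith)
      have hl2 : l < lss := max_lt (by linarith) (by linarith)
      have hl3 : dist l lss < δ := by
        rw [Real.dist_eq, abs_sub_lt_iff]
        refine ⟨by linarith, ?_⟩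
        have := le_max_left (lss - δ/2) (lss/2); linarith
      have hb := hball hl3
      rw [Real.dist_eq] at hb
      have hneg : F (γ l) < 0 := by
        have := (abs_sub_lt_iff.mp hb).1; linarith
      rw [hglv l hl1] at hneg
      have : lss ≤ l := hlss ▸ csInf_le hSltBB ⟨hl1, hneg⟩
      linarith
    · exact h
    · exfalso
      obtain ⟨δ, hδ, hball⟩ := hca (F (γ lss)) h
      have hlt : sInf {l : ℝ | 0 < l ∧ i l - l < 0} < lss + δ := by
        rw [← hlss]; linarith
      obtain ⟨a, ha, halt⟩ := (csInf_lt_iff hSltBB hSltne).mp hlt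
      have ha1 : lss ≤ a := hlss ▸ csInf_le hSltBB ha
      have hd : dist a lss < δ := by
        rw [Real.dist_eq, abs_sub_lt_iff]; constructor <;> linarith
      have hb := hball hd
      rw [Real.dist_eq] at hb
      have : 0 < F (γ a) := by
        have := (abs_sub_lt_iff.mp hb).2; linarith
      rw [hglv a ha.1] at this
      linarith [ha.2]
  -- the sup S along the path
  set S : ℝ := sSup ((fun l => F (γ l)) '' Ioo 0 lss) with hS
  have hSBA : BddAbove ((fun l => F (γ l)) '' Ioo 0 lss) := by
    have hK : IsCompact ((fun l => F (γ l)) '' Icc 0 lss) :=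
      isCompact_Icc.image_of_continuousOn (hgcont.mono (fun x hx => hx.1))
    exact hK.bddAbove.mono (image_mono Ioo_subset_Icc_self)
  have hSge : ∀ l ∈ Ioo 0 lss, F (γ l) ≤ S :=
    fun l hl => le_csSup hSBA (mem_image_of_mem _ hl)
  have hSpos : 0 < S := by
    set l0 := min ls lss / 2 with hl0
    have h1 : 0 < l0 := by
      have := lt_min hlspos hlsspos; positivity
    have h2 : l0 < ls := by
      have := min_le_left ls lss; simp only [hl0]; linarith
    have h3 : l0 < lss := by
      have := min_le_right ls lss; simp only [hl0]; linarith
    have := hSge l0 ⟨h1, h3⟩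
    rw [hglv l0 h1] at this
    linarith [hgspos l0 h1 h2]
  -- lower bound: every admissible path has sup ≥ S
  have hclaim : ∀ m ∈ {m : ℝ | ∃ η : ℝ → X, ContinuousOn η (Icc 0 1) ∧ η 0 = 0 ∧
      F (η 1) < 0 ∧ m = sSup ((fun t => F (η t)) '' Icc 0 1)}, S ≤ m := by
    rintro m ⟨η, hηc, hη0, hη1, rfl⟩
    have hBA : BddAbove ((fun t => F (η t)) '' Icc 0 1) :=
      (isCompact_Icc.image_of_continuousOn (hFc.comp_continuousOn hηc)).bddAbove
    have ha : lss ≤ U (η 1) := by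
      have h1 : T (η 1) - U (η 1) < 0 := by rw [← hF]; exact hη1
      have h2 : 0 < U (η 1) := by linarith [hTnonneg (η 1)]
      have h3 : i (U (η 1)) - U (η 1) < 0 := by linarith [hile (η 1)]
      exact hlss ▸ csInf_le hSltBB ⟨h2, h3⟩
    refine csSup_le ⟨F (γ (lss/2)), mem_image_of_mem _ ⟨by linarith, by linarith⟩⟩ ?_
    rintro b ⟨l, hl, rfl⟩
    have hmem : l ∈ Icc ((fun t => U (η t)) 0) ((fun t => U (η t)) 1) := by
      simp only [hη0, hU0]
      exact ⟨hl.1.le, le_trans hl.2.le ha⟩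
    obtain ⟨t, ht, htl⟩ := intermediate_value_Icc zero_le_one (hU.comp_continuousOn hηc) hmem
    simp only [Function.comp_apply] at htl
    have hle : F (γ l) ≤ F (η t) := by
      rw [hglv l hl.1, hF, ← htl]
      linarith [hile (η t)]
    exact hle.trans (le_csSup hBA ⟨t, ht, rfl⟩)
  -- upper bound paths
  have hpath : ∀ ε : ℝ, 0 < ε → ∃ m ∈ {m : ℝ | ∃ η : ℝ → X, ContinuousOn η (Icc 0 1) ∧
      η 0 = 0 ∧ F (η 1) < 0 ∧ m = sSup ((fun t => F (η t)) '' Icc 0 1)}, m ≤ S + ε := by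
    intro ε hε
    obtain ⟨δ, hδ, hball⟩ := hca ε hε
    have hlt : sInf {l : ℝ | 0 < l ∧ i l - l < 0} < lss + δ := by
      rw [← hlss]; linarith
    obtain ⟨Λ, hΛ, hΛlt⟩ := (csInf_lt_iff hSltBB hSltne).mp hlt
    have hΛge : lss ≤ Λ := hlss ▸ csInf_le hSltBB hΛ
    refine ⟨_, ⟨fun t => γ (t * Λ), ?_, ?_, ?_, rfl⟩, ?_⟩
    · exact hγcont.comp ((continuous_id.mul continuous_const).continuousOn)
        (fun t ht => mul_nonneg ht.1 hΛ.1.le)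
    · simp [hγ0]
    · simp only [one_mul]
      rw [hglv Λ hΛ.1]; exact hΛ.2
    · have hne : ((fun t => F (γ (t * Λ))) '' Icc (0:ℝ) 1).Nonempty :=
        ⟨_, mem_image_of_mem _ (left_mem_Icc.mpr zero_le_one)⟩
      refine csSup_le hne ?_
      rintro b ⟨t, ht, rfl⟩
      simp only
      set l := t * Λ with hldef
      have hl0 : 0 ≤ l := mul_nonneg ht.1 hΛ.1.le
      have hlΛ : l ≤ Λ := by
        calc l = t * Λ := rfl
        _ ≤ 1 * Λ := by apply mul_le_mul_of_nonneg_right ht.2 hΛ.1.le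
        _ = Λ := one_mul Λ
      rcases hl0.lt_or_eq with hl0' | hl0'
      · rcases lt_trichotomy l lss with h1 | h1 | h1
        · linarith [hSge l ⟨hl0', h1⟩]
        · rw [h1, hglss]; linarith
        · have hd : dist l lss < δ := by
            rw [Real.dist_eq, abs_sub_lt_iff]; constructor <;> linarith
          have hb := hball hd
          rw [Real.dist_eq, hglss] at hb
          have := (abs_sub_lt_iff.mp hb).1
          linarith
      · rw [← hl0', hg0]; linarith
  obtain ⟨m0, hm0, _⟩ := hpath 1 one_pos
  have hcS : c = S := by
    refine le_antisymm ?_ (hc ▸ le_csInf ⟨m0, hm0⟩ hclaim)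
    refine le_of_forall_pos_le_add ?_
    intro ε hε
    obtain ⟨m, hm, hmle⟩ := hpath ε hε
    exact le_trans (hc ▸ csInf_le ⟨S, hclaim⟩ hm) hmle
  refine ⟨hcS ▸ hSpos, ?_, hcS⟩
  rw [hcS, hS]
  congr 1
  refine image_congr ?_
  intro l hl
  have hU1 : U (γ l) = l := (hγ l hl.1).1
  show F (γ l) = sInf (F '' {u | U u = l})
  refine Eq.symm ?_
  refine le_antisymm (csInf_le ?_ (mem_image_of_mem F hU1)) ?_
  · refine ⟨i l - l, ?_⟩
    rintro x ⟨u, hu, rfl⟩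
    have := hile u
    rw [hu] at this
    rw [hF, hu]; linarith
  · refine le_csInf ⟨F (γ l), ⟨γ l, hU1, rfl⟩⟩ ?_
    rintro x ⟨u, hu, rfl⟩
    have := hile u
    rw [hu] at this
    rw [hglv l hl.1, hF, hu]
    linarith
end

section
/- Let $X$ be a Banach space, $T, U : X \to \mathbb{R}$ continuous with $T \geq 0$, $T(0)=U(0)=0$, $F = T - U$, $i_\lambda = \inf\{T(u): U(u)=\lambda\}$, and $\lambda^{**} = \inf\{\lambda > 0 : i_\lambda - \lambda < 0\} > 0$. Assume $i_\lambda - \lambda \geq 0$ for all $\lambda \in (0, \lambda^{**}]$, and there is a continuous $\gamma : [0,\infty)\to X$ with $U(\gamma(\lambda))=\lambda$, $T(\gamma(\lambda))=i_\lambda$ for $\lambda > 0$, and $\gamma(0)=0$. Let $c$ be the mountain pass level over paths $\eta$ with $\eta(0)=0$, $F(\eta(1))<0$. Then $c \geq \sup_{\lambda \in (0,\lambda^{**})}(i_\lambda - \lambda)$. -/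
open Set

/-- Lower-bound half of the max-min characterization: the mountain pass level `c`
is at least the supremum over `λ ∈ (0, λ**)` of `i λ - λ`. -/
theorem mountain_pass_lower_bound
    {X : Type*} [NormedAddCommGroup X] [NormedSpace ℝ X] [CompleteSpace X]
    (T U : X → ℝ) (hT : Continuous T) (hU : Continuous U)
    (hTnonneg : ∀ u, 0 ≤ T u) (hT0 : T 0 = 0) (hU0 : U 0 = 0)
    (F : X → ℝ) (hF : ∀ u, F u = T u - U u)
    (i : ℝ → ℝ) (hi : ∀ l : ℝ, i l = sInf (T '' {u | U u = l}))
    (lss : ℝ) (hlss : lss = sInf {l : ℝ | 0 < l ∧ i l - l < 0})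
    (hlsspos : 0 < lss)
    (hnonneg : ∀ l ∈ Ioc (0:ℝ) lss, 0 ≤ i l - l)
    (γ : ℝ → X) (hγcont : ContinuousOn γ (Ici 0)) (hγ0 : γ 0 = 0)
    (hγ : ∀ l : ℝ, 0 < l → U (γ l) = l ∧ T (γ l) = i l)
    (c : ℝ)
    (hc : c = sInf {m : ℝ | ∃ η : ℝ → X, ContinuousOn η (Icc 0 1) ∧ η 0 = 0 ∧
            F (η 1) < 0 ∧ m = sSup ((fun t => F (η t)) '' Icc 0 1)}) :
    sSup ((fun l => i l - l) '' Ioo 0 lss) ≤ c := by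
  have hFcont : Continuous F := by
    have : F = fun u => T u - U u := funext hF
    rw [this]; exact hT.sub hU
  -- i l ≤ T u whenever U u = l
  have hile : ∀ (l : ℝ) (u : X), U u = l → i l ≤ T u := by
    intro l u hu
    rw [hi l]
    exact csInf_le ⟨0, by rintro x ⟨v, -, rfl⟩; exact hTnonneg v⟩ ⟨u, hu, rfl⟩
  -- the set defining lss is nonempty
  have hSne : {l : ℝ | 0 < l ∧ i l - l < 0}.Nonempty := by
    by_contra h
    rw [Set.not_nonempty_iff_eq_empty] at h
    rw [hlss, h, Real.sInf_empty] at hlsspos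
    exact lt_irrefl 0 hlsspos
  obtain ⟨l0, hl0pos, hl0neg⟩ := hSne
  -- the admissible-path set is nonempty
  have hMne : {m : ℝ | ∃ η : ℝ → X, ContinuousOn η (Icc 0 1) ∧ η 0 = 0 ∧
      F (η 1) < 0 ∧ m = sSup ((fun t => F (η t)) '' Icc 0 1)}.Nonempty := by
    refine ⟨_, fun t => γ (t * l0), ?_, ?_, ?_, rfl⟩
    · apply hγcont.comp (continuous_mul_right l0).continuousOn
      intro t ht
      exact mul_nonneg ht.1 hl0pos.le
    · simp [hγ0]
    · obtain ⟨h1, h2⟩ := hγ l0 hl0pos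
      simpa [hF, h1, h2] using hl0neg
  -- key bound: for each λ ∈ (0, lss) and each admissible value m, i λ - λ ≤ m
  have key : ∀ l ∈ Ioo (0:ℝ) lss, ∀ m ∈ {m : ℝ | ∃ η : ℝ → X,
      ContinuousOn η (Icc 0 1) ∧ η 0 = 0 ∧ F (η 1) < 0 ∧
      m = sSup ((fun t => F (η t)) '' Icc 0 1)}, i l - l ≤ m := by
    rintro l ⟨hlpos, hllt⟩ m ⟨η, hηc, hη0, hη1, rfl⟩
    -- U (η 1) ≥ lss
    have hT1 : 0 ≤ T (η 1) := hTnonneg _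
    have hU1pos : T (η 1) < U (η 1) := by
      have := hη1; rw [hF] at this; linarith
    have hmem : U (η 1) ∈ {l : ℝ | 0 < l ∧ i l - l < 0} := by
      refine ⟨lt_of_le_of_lt hT1 hU1pos, ?_⟩
      have := hile (U (η 1)) (η 1) rfl
      linarith
    have hlss_le : lss ≤ U (η 1) := by
      rw [hlss]
      exact csInf_le ⟨0, fun x hx => hx.1.le⟩ hmem
    -- IVT: find t with U (η t) = l
    have hUη : ContinuousOn (fun t => U (η t)) (Icc (0:ℝ) 1) :=
      hU.comp_continuousOn hηc
    have hIVT := intermediate_value_Icc (by norm_num : (0:ℝ) ≤ 1) hUη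
    have hlmem : l ∈ Icc (U (η 0)) (U (η 1)) := by
      rw [hη0, hU0]
      exact ⟨hlpos.le, le_trans hllt.le hlss_le⟩
    obtain ⟨t, ht, htl⟩ := hIVT hlmem
    -- conclude
    have htl' : U (η t) = l := htl
    have h1 : i l - l ≤ F (η t) := by
      have := hile l (η t) htl'
      rw [hF, htl']
      linarith
    have hbdd : BddAbove ((fun t => F (η t)) '' Icc (0:ℝ) 1) :=
      (isCompact_Icc.image_of_continuousOn (hFcont.comp_continuousOn hηc)).bddAbove
    exact le_trans h1 (le_csSup hbdd ⟨t, ht, rfl⟩)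
  -- assemble
  have hIoo : (Ioo (0:ℝ) lss).Nonempty := ⟨lss / 2, by positivity, by linarith⟩
  apply csSup_le (hIoo.image _)
  rintro x ⟨l, hl, rfl⟩
  rw [hc]
  exact le_csInf hMne (key l hl)
end

section
/- Let $X$ be a Banach space, $F = T - U$ with $T, U$ continuous, $T \geq 0$, $T(0)=U(0)=0$, $i_\lambda = \inf\{T(u): U(u)=\lambda\}$, and suppose there is a continuous $\gamma:[0,\infty)\to X$ with $\gamma(0)=0$, $U(\gamma(\lambda))=\lambda$ and $T(\gamma(\lambda))=i_\lambda$ for $\lambda>0$. Assume $\lambda^{**} := \inf\{\lambda>0 : i_\lambda - \lambda < 0\} \in (0,\infty)$ and that $i_\lambda \to 0$ as $\lambda \to 0^+$. Then there exists a sequence $\lambda_k > \lambda^{**}$ with $\lambda_k \to \lambda^{**}$, $F(\gamma(\lambda_k)) < 0$, and $F(\gamma(\lambda_k)) \to 0$, and moreover $c \leq \sup_{\lambda \in (0,\lambda^{**})} F(\gamma(\lambda))$, where $c$ is the mountain pass level. -/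
open Set

/-- Upper-bound half of the max-min theorem: there is a sequence `λ_k > λ**` with
`λ_k → λ**`, `F (γ λ_k) < 0` and `F (γ λ_k) → 0`, and the mountain pass level `c`
is at most the supremum of `F` along `γ` on `(0, λ**)`. -/
theorem mountain_pass_upper_bound
    {X : Type*} [NormedAddCommGroup X] [NormedSpace ℝ X] [CompleteSpace X]
    (T U : X → ℝ) (hT : Continuous T) (hU : Continuous U)
    (hTnonneg : ∀ u, 0 ≤ T u) (hT0 : T 0 = 0) (hU0 : U 0 = 0)
    (F : X → ℝ) (hF : ∀ u, F u = T u - U u)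
    (i : ℝ → ℝ) (hi : ∀ l : ℝ, i l = sInf (T '' {u | U u = l}))
    (γ : ℝ → X) (hγcont : ContinuousOn γ (Ici 0)) (hγ0 : γ 0 = 0)
    (hγ : ∀ l : ℝ, 0 < l → U (γ l) = l ∧ T (γ l) = i l)
    (lss : ℝ) (hlss : lss = sInf {l : ℝ | 0 < l ∧ i l - l < 0})
    (hlsspos : 0 < lss) (hne : {l : ℝ | 0 < l ∧ i l - l < 0}.Nonempty)
    (hi0 : Filter.Tendsto i (nhdsWithin 0 (Ioi 0)) (nhds 0))
    (c : ℝ)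
    (hc : c = sInf {m : ℝ | ∃ η : ℝ → X, ContinuousOn η (Icc 0 1) ∧ η 0 = 0 ∧
            F (η 1) < 0 ∧ m = sSup ((fun t => F (η t)) '' Icc 0 1)}) :
    (∃ lk : ℕ → ℝ, (∀ k, lss < lk k) ∧
      Filter.Tendsto lk Filter.atTop (nhds lss) ∧
      (∀ k, F (γ (lk k)) < 0) ∧
      Filter.Tendsto (fun k => F (γ (lk k))) Filter.atTop (nhds 0)) ∧
    c ≤ sSup ((fun l => F (γ l)) '' Ioo 0 lss) := by
  have hFc : Continuous F := by
    have hFe : F = fun u => T u - U u := funext hF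
    rw [hFe]; exact hT.sub hU
  set S := {l : ℝ | 0 < l ∧ i l - l < 0} with hSdef
  set f : ℝ → ℝ := fun l => F (γ l) with hfdef
  have hfc : ContinuousOn f (Ici 0) := hFc.comp_continuousOn hγcont
  have hF0 : F 0 = 0 := by rw [hF]; simp [hT0, hU0]
  have hf0 : f 0 = 0 := by simp only [hfdef, hγ0, hF0]
  have hfl : ∀ l, 0 < l → f l = i l - l := by
    intro l hl
    obtain ⟨h1, h2⟩ := hγ l hl
    simp only [hfdef, hF (γ l), h1, h2]
  have hSbdd : BddBelow S := ⟨0, fun l hl => le_of_lt hl.1⟩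
  have hSge : ∀ l ∈ S, lss ≤ l := fun l hl => hlss ▸ csInf_le hSbdd hl
  have hfat : ContinuousAt f lss :=
    hfc.continuousAt (Ici_mem_nhds hlsspos)
  have hnonneg : ∀ l, 0 < l → l < lss → 0 ≤ f l := by
    intro l hl hll
    rw [hfl l hl]
    by_contra h
    push_neg at h
    exact absurd (hSge l ⟨hl, h⟩) (not_le.2 hll)
  -- f lss = 0
  have hflss : f lss = 0 := by
    rcases lt_trichotomy (f lss) 0 with h | h | h
    · -- would give elements of S below lss
      exfalso
      obtain ⟨δ, hδ, hδf⟩ := Metric.continuousAt_iff.mp hfat (-(f lss)) (by linarith)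
      set l := lss - min δ lss / 2 with hl
      have hminpos : 0 < min δ lss := lt_min hδ hlsspos
      have hl0 : 0 < l := by
        have : min δ lss ≤ lss := min_le_right _ _
        simp only [hl]; linarith
      have hll : l < lss := by simp only [hl]; linarith
      have hdist : dist l lss < δ := by
        have h1 : min δ lss ≤ δ := min_le_left _ _
        rw [Real.dist_eq]
        simp only [hl]
        rw [abs_of_nonpos (by linarith)]
        linarith
      have := hδf hdist
      rw [Real.dist_eq] at this
      have hfln : f l < 0 := by
        rcases abs_lt.mp this with ⟨ha, hb⟩
        linarith
      have : l ∈ S := ⟨hl0, by rw [← hfl l hl0]; exact hfln⟩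
      exact absurd (hSge l this) (not_le.2 hll)
    · exact h
    · -- would give f > 0 on a right nbhd, contradicting elements of S near inf
      exfalso
      obtain ⟨δ, hδ, hδf⟩ := Metric.continuousAt_iff.mp hfat (f lss) h
      have hlt : sInf S < lss + δ := by rw [← hlss]; linarith
      obtain ⟨l, hlS, hlub⟩ := exists_lt_of_csInf_lt hne hlt
      have hge := hSge l hlS
      have hdist : dist l lss < δ := by
        rw [Real.dist_eq, abs_of_nonneg (by linarith)]; linarith
      have := hδf hdist
      rw [Real.dist_eq] at this
      have hpos : 0 < f l := by
        rcases abs_lt.mp this with ⟨ha, hb⟩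
        linarith
      have : f l < 0 := by rw [hfl l hlS.1]; exact hlS.2
      linarith
  have hSne : ∀ l ∈ S, lss < l := by
    intro l hl
    rcases lt_or_eq_of_le (hSge l hl) with h | h
    · exact h
    · exfalso
      have : f l < 0 := by rw [hfl l hl.1]; exact hl.2
      rw [← h, hflss] at this
      exact lt_irrefl 0 this
  constructor
  · -- the sequence
    have hseq : ∀ k : ℕ, ∃ l, l ∈ S ∧ l < lss + 1 / ((k : ℝ) + 1) := by
      intro k
      have hpos : (0 : ℝ) < 1 / ((k : ℝ) + 1) := by positivity
      exact exists_lt_of_csInf_lt hne (by rw [← hlss]; linarith)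
    choose lk hlkS hlkub using hseq
    refine ⟨lk, fun k => hSne _ (hlkS k), ?_, ?_, ?_⟩
    · -- squeeze
      have h1 : Filter.Tendsto (fun k : ℕ => lss + 1 / ((k : ℝ) + 1))
          Filter.atTop (nhds lss) := by
        have := tendsto_one_div_add_atTop_nhds_zero_nat (𝕜 := ℝ)
        have h := Filter.Tendsto.add (tendsto_const_nhds (x := lss)
          (f := Filter.atTop (α := ℕ))) this
        simpa using h
      exact tendsto_of_tendsto_of_tendsto_of_le_of_le tendsto_const_nhds h1
        (fun k => le_of_lt (hSne _ (hlkS k))) (fun k => le_of_lt (hlkub k))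
    · intro k
      have := (hlkS k).2
      have h := hfl (lk k) (hlkS k).1
      simp only [hfdef] at h
      rw [h]; exact this
    · have htend : Filter.Tendsto lk Filter.atTop (nhds lss) := by
        have h1 : Filter.Tendsto (fun k : ℕ => lss + 1 / ((k : ℝ) + 1))
            Filter.atTop (nhds lss) := by
          have := tendsto_one_div_add_atTop_nhds_zero_nat (𝕜 := ℝ)
          have h := Filter.Tendsto.add (tendsto_const_nhds (x := lss)
            (f := Filter.atTop (α := ℕ))) this
          simpa using h
        exact tendsto_of_tendsto_of_tendsto_of_le_of_le tendsto_const_nhds h1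
          (fun k => le_of_lt (hSne _ (hlkS k))) (fun k => le_of_lt (hlkub k))
      have := (hfat.tendsto.comp htend)
      rw [hflss] at this
      exact this
  · -- upper bound for c
    set M := sSup (f '' Ioo 0 lss) with hM
    have hbddIcc : BddAbove (f '' Icc 0 lss) :=
      (isCompact_Icc.image_of_continuousOn (hfc.mono (Icc_subset_Ici_self))).bddAbove
    have hbdd : BddAbove (f '' Ioo 0 lss) :=
      hbddIcc.mono (image_mono (f := f) Ioo_subset_Icc_self)
    have hMnonneg : 0 ≤ M := by
      have hmem : f (lss / 2) ∈ f '' Ioo 0 lss :=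
        ⟨lss / 2, ⟨half_pos hlsspos, half_lt_self hlsspos⟩, rfl⟩
      have := le_csSup hbdd hmem
      have h0 := hnonneg (lss / 2) (half_pos hlsspos) (half_lt_self hlsspos)
      linarith
    -- the admissible set is bounded below by 0
    set A := {m : ℝ | ∃ η : ℝ → X, ContinuousOn η (Icc 0 1) ∧ η 0 = 0 ∧
        F (η 1) < 0 ∧ m = sSup ((fun t => F (η t)) '' Icc 0 1)} with hA
    have hAlb : ∀ m ∈ A, (0 : ℝ) ≤ m := by
      rintro m ⟨η, hηc, hη0, hη1, rfl⟩
      by_cases hb : BddAbove ((fun t => F (η t)) '' Icc 0 1)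
      · have hmem : (0 : ℝ) ∈ (fun t => F (η t)) '' Icc 0 1 :=
          ⟨0, ⟨le_refl 0, zero_le_one⟩, by simp [hη0, hF0]⟩
        exact le_csSup hb hmem
      · rw [Real.sSup_of_not_bddAbove hb]
    have hkey : ∀ ε > 0, c ≤ M + ε := by
      intro ε hε
      obtain ⟨δ, hδ, hδf⟩ := Metric.continuousAt_iff.mp hfat ε hε
      obtain ⟨l, hlS, hlub⟩ := exists_lt_of_csInf_lt hne
        (show sInf S < lss + δ by rw [← hlss]; linarith)
      have hllss := hSne l hlS
      have hl0 := hlS.1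
      set η : ℝ → X := fun t => γ (t * l) with hη
      have hηc : ContinuousOn η (Icc 0 1) := by
        apply hγcont.comp (Continuous.continuousOn (by continuity))
        intro t ht
        exact mul_nonneg ht.1 (le_of_lt hl0)
      have hη0 : η 0 = 0 := by simp [hη, hγ0]
      have hη1 : F (η 1) < 0 := by
        have : f l < 0 := by rw [hfl l hl0]; exact hlS.2
        simpa [hη, hfdef] using this
      have hmemA : sSup ((fun t => F (η t)) '' Icc 0 1) ∈ A :=
        ⟨η, hηc, hη0, hη1, rfl⟩
      have hcle : c ≤ sSup ((fun t => F (η t)) '' Icc 0 1) := by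
        rw [hc]
        exact csInf_le ⟨0, hAlb⟩ hmemA
      have hsup : sSup ((fun t => F (η t)) '' Icc 0 1) ≤ M + ε := by
        apply Real.sSup_le
        · rintro x ⟨t, ht, rfl⟩
          have hs0 : 0 ≤ t * l := mul_nonneg ht.1 (le_of_lt hl0)
          have hsl : t * l ≤ l := by
            calc t * l ≤ 1 * l := mul_le_mul_of_nonneg_right ht.2 (le_of_lt hl0)
            _ = l := one_mul l
          show f (t * l) ≤ M + ε
          rcases lt_or_ge (t * l) lss with hcase | hcase
          · rcases eq_or_lt_of_le hs0 with h0 | h0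
            · rw [← h0, hf0]; linarith
            · have := le_csSup hbdd (⟨t * l, ⟨h0, hcase⟩, rfl⟩ :
                f (t * l) ∈ f '' Ioo 0 lss)
              linarith
          · have hdist : dist (t * l) lss < δ := by
              rw [Real.dist_eq, abs_of_nonneg (by linarith)]
              linarith
            have := hδf hdist
            rw [Real.dist_eq, hflss, sub_zero] at this
            have := (abs_lt.mp this).2
            linarith
        · linarith
      linarith
    exact le_of_forall_pos_le_add hkey
end
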